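/- Suppose E‖w_{t+1} - w_t + η f'(w_t)‖² ≤ C²η²Δ for all t, f is μ-strongly convex with L-Lipschitz gradient and minimizer w*, and 0 < η < μ/(2L²). Then δ_{t+1} ≤ (1-ημ)δ_t + (2/(ημ))C²η²Δ, where δ_t = E‖w_t - w*‖². -/

import Mathlib

open MeasureTheory RealInnerProductSpace

set_option maxHeartbeats 800000

/-- One-step descent inequality: if the aggregation error satisfies
`E‖w_{t+1} - w_t + η f'(w_t)‖² ≤ C²η²Δ`, `f` is `μ`-strongly convex with
`L`-Lipschitz gradient, `f'(w*) = 0`, and `0 < η < μ/(2L²)`, then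
`δ_{t+1} ≤ (1-ημ)δ_t + (2/(ημ))C²η²Δ` where `δ_t = E‖w_t - w*‖²`. -/
theorem one_step_descent {dim : ℕ} {Ω : Type*} [MeasurableSpace Ω]
    (ν : Measure Ω) [IsProbabilityMeasure ν]
    (f : EuclideanSpace ℝ (Fin dim) → ℝ)
    (f' : EuclideanSpace ℝ (Fin dim) → EuclideanSpace ℝ (Fin dim))
    (wstar : EuclideanSpace ℝ (Fin dim)) (w : ℕ → Ω → EuclideanSpace ℝ (Fin dim))
    (η μ L C Δ : ℝ)
    (hμ : 0 < μ) (hL : 0 < L) (hC : 0 < C) (hΔ : 0 < Δ)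
    (hsc : ∀ x y, f x ≥ f y + ⟪f' y, x - y⟫ + μ / 2 * ‖x - y‖ ^ 2)
    (hlip : ∀ x y, ‖f' x - f' y‖ ≤ L * ‖x - y‖)
    (hcrit : f' wstar = 0)
    (hη : 0 < η) (hηlt : η < μ / (2 * L ^ 2))
    (hInt1 : ∀ t, Integrable (fun ω => ‖w t ω - wstar‖ ^ 2) ν)
    (hInt2 : ∀ t, Integrable (fun ω => ‖w t ω - η • f' (w t ω) - wstar‖ ^ 2) ν)
    (hInt3 : ∀ t, Integrable (fun ω => ‖w (t + 1) ω - w t ω + η • f' (w t ω)‖ ^ 2) ν)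
    (hstep : ∀ t, ∫ ω, ‖w (t + 1) ω - w t ω + η • f' (w t ω)‖ ^ 2 ∂ν ≤ C ^ 2 * η ^ 2 * Δ) :
    ∀ t, ∫ ω, ‖w (t + 1) ω - wstar‖ ^ 2 ∂ν ≤
      (1 - η * μ) * ∫ ω, ‖w t ω - wstar‖ ^ 2 ∂ν + 2 / (η * μ) * C ^ 2 * η ^ 2 * Δ := by
  intro t
  have hηL2 : η * (2 * L ^ 2) < μ := (lt_div_iff₀ (by positivity)).mp hηlt
  rcases Nat.eq_zero_or_pos dim with hdim | hdim
  · subst hdim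
    have hzero : ∀ (x : EuclideanSpace ℝ (Fin 0)), x = (0 : EuclideanSpace ℝ (Fin 0)) :=
      fun x => Subsingleton.elim x 0
    have e1 : ∫ ω, ‖w (t + 1) ω - wstar‖ ^ 2 ∂ν = 0 := by
      simp [hzero (w (t + 1) _ - wstar)]
    have e2 : ∫ ω, ‖w t ω - wstar‖ ^ 2 ∂ν = 0 := by
      simp [hzero (w t _ - wstar)]
    rw [e1, e2, mul_zero, zero_add]
    positivity
  -- main case : dim > 0
  -- first derive μ ≤ L
  have hμL : μ ≤ L := by
    set e : EuclideanSpace ℝ (Fin dim) := EuclideanSpace.single ⟨0, hdim⟩ (1 : ℝ) with he_def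
    have he : ‖e‖ = 1 := by simp [he_def]
    have hd : wstar + e - wstar = e := by abel
    have hd2 : wstar - (wstar + e) = -e := by abel
    have h1 := hsc (wstar + e) wstar
    have h2 := hsc wstar (wstar + e)
    rw [hd, he] at h1
    rw [hd2, inner_neg_right, norm_neg, he] at h2
    have hi := real_inner_le_norm (f' (wstar + e) - f' wstar) e
    rw [inner_sub_left, he, mul_one] at hi
    have hl := hlip (wstar + e) wstar
    rw [hd, he, mul_one] at hl
    nlinarith [h1, h2, hi, hl]
  set s : ℝ := η * μ with hs_def
  have hs0 : (0 : ℝ) < s := mul_pos hη hμ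
  have h2s : (0 : ℝ) < 2 - s := by nlinarith [mul_le_mul_of_nonneg_left hμL hη.le, mul_pos hL hL]
  have h2ηL : 2 * η ^ 2 * L ^ 2 < s := by nlinarith [hηL2, hη]
  -- Peter-Paul inequality
  have pp : ∀ a b : EuclideanSpace ℝ (Fin dim),
      ‖a + b‖ ^ 2 ≤ 2 / (2 - s) * ‖b‖ ^ 2 + 2 / s * ‖a‖ ^ 2 := by
    intro a b
    have hi := real_inner_le_norm a b
    have key : 2 * ⟪a, b⟫ ≤ s / (2 - s) * ‖b‖ ^ 2 + (2 - s) / s * ‖a‖ ^ 2 := by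
      rw [div_mul_eq_mul_div, div_mul_eq_mul_div, div_add_div _ _ h2s.ne' hs0.ne',
        le_div_iff₀ (mul_pos h2s hs0)]
      nlinarith [sq_nonneg (s * ‖b‖ - (2 - s) * ‖a‖), mul_pos h2s hs0, hi,
        norm_nonneg a, norm_nonneg b]
    have e1 : (2 : ℝ) / (2 - s) = 1 + s / (2 - s) := by field_simp; ring
    have e2 : (2 : ℝ) / s = 1 + (2 - s) / s := by field_simp; ring
    rw [e1, e2, norm_add_sq_real]
    nlinarith [key]
  -- pointwise contraction
  have key : ∀ x : EuclideanSpace ℝ (Fin dim),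
      ‖x - η • f' x - wstar‖ ^ 2 ≤ (1 - 2 * s + η ^ 2 * L ^ 2) * ‖x - wstar‖ ^ 2 := by
    intro x
    have h1 := hsc wstar x
    have h2 := hsc x wstar
    rw [hcrit, inner_zero_left] at h2
    have hws : wstar - x = -(x - wstar) := by abel
    rw [hws, inner_neg_right, norm_neg] at h1
    have hmono : μ * ‖x - wstar‖ ^ 2 ≤ ⟪f' x, x - wstar⟫ := by nlinarith [h1, h2]
    have hnorm : ‖f' x‖ ≤ L * ‖x - wstar‖ := by
      have := hlip x wstar
      rwa [hcrit, sub_zero] at this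
    have heq : x - η • f' x - wstar = (x - wstar) - η • f' x := by abel
    rw [heq, norm_sub_sq_real, real_inner_smul_right, norm_smul, Real.norm_eq_abs]
    have habs : (|η| * ‖f' x‖) ^ 2 = η ^ 2 * ‖f' x‖ ^ 2 := by
      rw [mul_pow, sq_abs]
    rw [habs]
    have hic : ⟪x - wstar, f' x⟫ = ⟪f' x, x - wstar⟫ := real_inner_comm _ _
    rw [hic]
    have hG2 : ‖f' x‖ ^ 2 ≤ L ^ 2 * ‖x - wstar‖ ^ 2 := by
      nlinarith [hnorm, norm_nonneg (f' x), norm_nonneg (x - wstar)]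
    have h1' : η * (μ * ‖x - wstar‖ ^ 2) ≤ η * ⟪f' x, x - wstar⟫ :=
      mul_le_mul_of_nonneg_left hmono hη.le
    have h2' : η ^ 2 * ‖f' x‖ ^ 2 ≤ η ^ 2 * (L ^ 2 * ‖x - wstar‖ ^ 2) :=
      mul_le_mul_of_nonneg_left hG2 (sq_nonneg η)
    have hs : s = η * μ := hs_def
    nlinarith [h1', h2']
  set ρ : ℝ := 1 - 2 * s + η ^ 2 * L ^ 2 with hρ_def
  set c1 : ℝ := 2 / (2 - s) with hc1_def
  set c2 : ℝ := 2 / s with hc2_def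
  have hc1 : 0 < c1 := by positivity
  have hc2 : 0 < c2 := by positivity
  have hδt : 0 ≤ ∫ ω, ‖w t ω - wstar‖ ^ 2 ∂ν := integral_nonneg fun ω => by positivity
  have step1 : ∫ ω, ‖w (t + 1) ω - wstar‖ ^ 2 ∂ν ≤
      c1 * ∫ ω, ‖w t ω - η • f' (w t ω) - wstar‖ ^ 2 ∂ν +
      c2 * ∫ ω, ‖w (t + 1) ω - w t ω + η • f' (w t ω)‖ ^ 2 ∂ν := by
    rw [← integral_const_mul, ← integral_const_mul, ← integral_add ((hInt2 t).const_mul c1)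
      ((hInt3 t).const_mul c2)]
    refine integral_mono (hInt1 (t + 1)) (((hInt2 t).const_mul c1).add
      ((hInt3 t).const_mul c2)) fun ω => ?_
    have h := pp (w (t + 1) ω - w t ω + η • f' (w t ω)) (w t ω - η • f' (w t ω) - wstar)
    have hab : w (t + 1) ω - w t ω + η • f' (w t ω) + (w t ω - η • f' (w t ω) - wstar)
        = w (t + 1) ω - wstar := by abel
    rwa [hab] at h
  have step2 : ∫ ω, ‖w t ω - η • f' (w t ω) - wstar‖ ^ 2 ∂ν ≤
      ρ * ∫ ω, ‖w t ω - wstar‖ ^ 2 ∂ν := by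
    rw [← integral_const_mul]
    exact integral_mono (hInt2 t) ((hInt1 t).const_mul ρ) fun ω => key (w t ω)
  have hρc1 : c1 * ρ ≤ 1 - s := by
    rw [hc1_def, div_mul_eq_mul_div, div_le_iff₀ h2s]
    nlinarith [h2ηL, hs0]
  calc ∫ ω, ‖w (t + 1) ω - wstar‖ ^ 2 ∂ν
      ≤ c1 * ∫ ω, ‖w t ω - η • f' (w t ω) - wstar‖ ^ 2 ∂ν +
        c2 * ∫ ω, ‖w (t + 1) ω - w t ω + η • f' (w t ω)‖ ^ 2 ∂ν := step1
    _ ≤ c1 * (ρ * ∫ ω, ‖w t ω - wstar‖ ^ 2 ∂ν) + c2 * (C ^ 2 * η ^ 2 * Δ) := by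
        gcongr
        all_goals first | exact hstep t | exact step2
    _ ≤ (1 - s) * ∫ ω, ‖w t ω - wstar‖ ^ 2 ∂ν + c2 * (C ^ 2 * η ^ 2 * Δ) := by
        have := mul_le_mul_of_nonneg_right hρc1 hδt
        nlinarith [this]
    _ = (1 - η * μ) * ∫ ω, ‖w t ω - wstar‖ ^ 2 ∂ν + 2 / (η * μ) * C ^ 2 * η ^ 2 * Δ := by
        rw [hc2_def, hs_def]; ring
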